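/- Every dg module M over a dg algebra A admits a semi-free resolution: there exists a semi-free dg A-module F together with a surjective quasi-isomorphism of dg A-modules f : F → M. -/

import Mathlib

/-!
STATEMENT 10: Every dg module `M` over a dg algebra `A` admits a semi-free resolution:
there is a semi-free dg `A`-module `F` together with a surjective quasi-isomorphism of
dg `A`-modules `f : F → M`.
-/

/-- A (left) dg module over the dg algebra `(A, 𝒜, dA)`. -/
structure DGMod (k A : Type) [CommRing k] [Ring A] [Algebra k A]
    (𝒜 : ℤ → Submodule k A) (dA : A →ₗ[k] A) where
  carrier : Type
  [acg : AddCommGroup carrier]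
  [modk : Module k carrier]
  [modA : Module A carrier]
  [tower : IsScalarTower k A carrier]
  grading : ℤ → Submodule k carrier
  [decomp : DirectSum.Decomposition grading]
  smul_mem : ∀ (i j : ℤ) (a : A) (m : carrier),
    a ∈ 𝒜 i → m ∈ grading j → a • m ∈ grading (i + j)
  d : carrier →ₗ[k] carrier
  d_mem : ∀ i : ℤ, ∀ m ∈ grading i, d m ∈ grading (i + 1)
  d_sq : ∀ m, d (d m) = 0
  leibniz : ∀ (i : ℤ) (a : A) (m : carrier), a ∈ 𝒜 i →
    d (a • m) = dA a • m + (Int.negOnePow i) • (a • d m)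

attribute [instance] DGMod.acg DGMod.modk DGMod.modA DGMod.tower DGMod.decomp

/-- A dg `A`-module is semi-free iff it admits a homogeneous `A`-basis `(b_i)` together
with an `ℕ`-valued weight such that `d b_i` lies in the `A`-span of the basis elements of
strictly smaller weight (equivalently, it admits an exhaustive filtration by dg
submodules with free subquotients). -/
def DGMod.IsSemiFree {k A : Type} [CommRing k] [Ring A] [Algebra k A]
    {𝒜 : ℤ → Submodule k A} {dA : A →ₗ[k] A} (F : DGMod k A 𝒜 dA) : Prop :=
  ∃ (ι : Type) (B : Module.Basis ι A F.carrier) (g : ι → ℤ) (w : ι → ℕ),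
    (∀ i, B i ∈ F.grading (g i)) ∧
    (∀ i, F.d (B i) ∈ Submodule.span A (⇑B '' {j | w j < w i}))


namespace SemiFreeCon

open DirectSum

variable {k A : Type} [CommRing k] [Ring A] [Algebra k A]
  (𝒜 : ℤ → Submodule k A) [GradedAlgebra 𝒜]

/-- The sign (Euler) operator `ε(a) = Σᵢ (-1)^i aᵢ`. -/
noncomputable def eps : A →ₗ[k] A :=
  (DirectSum.toModule k ℤ A (fun i => ((Int.negOnePow i : ℤ) • (𝒜 i).subtype))).comp
    (DirectSum.decomposeAlgEquiv 𝒜).toLinearMap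

lemma eps_of_mem {i : ℤ} {a : A} (ha : a ∈ 𝒜 i) :
    eps 𝒜 a = (Int.negOnePow i : ℤ) • a := by
  unfold eps
  simp only [LinearMap.comp_apply, AlgEquiv.toLinearMap_apply, decomposeAlgEquiv_apply]
  rw [DirectSum.decompose_of_mem 𝒜 ha, ← DirectSum.lof_eq_of k, DirectSum.toModule_lof]
  simp

lemma eps_one : eps 𝒜 1 = 1 := by
  rw [eps_of_mem 𝒜 (SetLike.one_mem_graded 𝒜)]; simp

lemma eps_mul (a b : A) : eps 𝒜 (a * b) = eps 𝒜 a * eps 𝒜 b := by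
  induction a using DirectSum.Decomposition.inductionOn 𝒜 with
  | zero => simp
  | homogeneous a' =>
    rename_i i
    obtain ⟨a, ha⟩ := a'
    induction b using DirectSum.Decomposition.inductionOn 𝒜 with
    | zero => simp
    | homogeneous b' =>
      rename_i j
      obtain ⟨b, hb⟩ := b'
      rw [eps_of_mem 𝒜 ha, eps_of_mem 𝒜 hb,
        eps_of_mem 𝒜 (SetLike.mul_mem_graded ha hb)]
      rw [smul_mul_assoc, mul_smul_comm, ← smul_assoc]
      congr 1
      push_cast [Int.negOnePow_add, smul_eq_mul]
      ring
    | add x y hx hy => rw [mul_add, map_add, map_add, mul_add, hx, hy]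
  | add x y hx hy => rw [add_mul, map_add, map_add, add_mul, hx, hy]

variable (dA : A →ₗ[k] A)
  (hdAdeg : ∀ i : ℤ, ∀ x ∈ 𝒜 i, dA x ∈ 𝒜 (i + 1))

include hdAdeg in
lemma eps_dA (a : A) : eps 𝒜 (dA a) = - dA (eps 𝒜 a) := by
  induction a using DirectSum.Decomposition.inductionOn 𝒜 with
  | zero => simp
  | homogeneous a' =>
    rename_i i
    obtain ⟨a, ha⟩ := a'
    rw [eps_of_mem 𝒜 (hdAdeg i a ha), eps_of_mem 𝒜 ha, map_zsmul]
    rw [← neg_smul]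
    congr 1
    push_cast [Int.negOnePow_succ]
    ring
  | add x y hx hy => simp only [map_add, hx, hy, neg_add]

variable (hdAleib : ∀ i : ℤ, ∀ x ∈ 𝒜 i, ∀ y : A,
      dA (x * y) = dA x * y + (Int.negOnePow i) • (x * dA y))

include hdAleib in
lemma dA_leibniz_eps (a b : A) : dA (a * b) = dA a * b + eps 𝒜 a * dA b := by
  induction a using DirectSum.Decomposition.inductionOn 𝒜 with
  | zero => simp
  | homogeneous a' =>
    rename_i i
    obtain ⟨a, ha⟩ := a'
    rw [hdAleib i a ha b, eps_of_mem 𝒜 ha]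
    rw [smul_mul_assoc]
    norm_num [Units.smul_def]
  | add x y hx hy =>
    simp only [add_mul, map_add, hx, hy, map_add]
    abel

include hdAleib in
lemma dA_one : dA 1 = 0 := by
  have h := hdAleib 0 1 (SetLike.one_mem_graded 𝒜) 1
  simpa using h

end SemiFreeCon

namespace SemiFreeCon
open DirectSum

variable {k A : Type} [CommRing k] [Ring A] [Algebra k A]
  (𝒜 : ℤ → Submodule k A) [GradedAlgebra 𝒜] (dA : A →ₗ[k] A)
variable (M : DGMod k A 𝒜 dA)

lemma Md_leibniz_eps (a : A) (m : M.carrier) :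
    M.d (a • m) = dA a • m + eps 𝒜 a • M.d m := by
  induction a using DirectSum.Decomposition.inductionOn 𝒜 with
  | zero => simp
  | homogeneous a' =>
    rename_i i
    obtain ⟨a, ha⟩ := a'
    rw [M.leibniz i a m ha, eps_of_mem 𝒜 ha, smul_assoc]
    norm_num [Units.smul_def]
  | add x y hx hy =>
    simp only [add_smul, map_add, hx, hy]
    abel

/-- Component of `M.d y` in degree `i` is `M.d` of the component of `y` in degree `i-1`. -/
lemma Md_component (y : M.carrier) (i : ℤ) :
    (DirectSum.decompose M.grading (M.d y) i : M.carrier)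
      = M.d (DirectSum.decompose M.grading y (i-1) : M.carrier) := by
  induction y using DirectSum.Decomposition.inductionOn M.grading with
  | zero => simp
  | homogeneous m' =>
    rename_i p
    obtain ⟨m, hm⟩ := m'
    by_cases h : i = p + 1
    · subst h
      rw [DirectSum.decompose_of_mem_same M.grading (M.d_mem p m hm),
        DirectSum.decompose_of_mem_same (x := m) M.grading (by simpa using hm)]
    · rw [DirectSum.decompose_of_mem_ne M.grading (M.d_mem p m hm) (by omega),
        DirectSum.decompose_of_mem_ne M.grading hm (by omega), map_zero]
  | add x y hx hy =>
    rw [map_add, DirectSum.decompose_add, DirectSum.decompose_add, DirectSum.add_apply,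
      DirectSum.add_apply, Submodule.coe_add, Submodule.coe_add, hx, hy, map_add]

end SemiFreeCon
namespace SemiFreeCon
section IdxTypes

variable (A' Mc : Type) [Zero A']

/-- Cumulative index types: `Cn n` indexes generators of stages `< n`. -/
def Cn : ℕ → Type :=
  fun n => Nat.rec Empty (fun _ Cp => Cp ⊕ ((ℤ × Mc) ⊕ (ℤ × (Cp →₀ A')))) n

/-- Generators of stage `n`. -/
abbrev Tn (n : ℕ) : Type := (ℤ × Mc) ⊕ (ℤ × (Cn A' Mc n →₀ A'))

/-- All generators. -/
def Idx : Type := Σ n, Tn A' Mc n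

/-- Embedding of stages `< n` into all generators. -/
def emC : (n : ℕ) → Cn A' Mc n → Idx A' Mc :=
  fun n => Nat.rec (motive := fun m => Cn A' Mc m → Idx A' Mc)
    (fun x => x.elim)
    (fun m ih x => Sum.elim ih (fun t => ⟨m, t⟩) x) n

lemma emC_fst_lt : ∀ (n : ℕ) (c : Cn A' Mc n), (emC A' Mc n c).1 < n := by
  intro n
  induction n with
  | zero => intro c; exact c.elim
  | succ n ih =>
    intro c
    cases c with
    | inl c => exact Nat.lt_succ_of_lt (ih c)
    | inr t => exact Nat.lt_succ_self n

lemma emC_inj : ∀ (n : ℕ), Function.Injective (emC A' Mc n) := by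
  intro n
  induction n with
  | zero => intro c; exact c.elim
  | succ n ih =>
    intro c c' h
    cases c with
    | inl c =>
      cases c' with
      | inl c' => exact congrArg Sum.inl (ih h)
      | inr t' =>
        have h1 : (emC A' Mc n c).1 = n := congrArg Sigma.fst h
        have h2 := emC_fst_lt A' Mc n c
        rw [h1] at h2
        exact absurd h2 (lt_irrefl n)
    | inr t =>
      cases c' with
      | inl c' =>
        have h1 : n = (emC A' Mc n c').1 := congrArg Sigma.fst h
        have h2 := emC_fst_lt A' Mc n c'
        rw [← h1] at h2
        exact absurd h2 (lt_irrefl n)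
      | inr t' =>
        have h' : (⟨n, t⟩ : Idx A' Mc) = ⟨n, t'⟩ := h
        injection h' with h1 h2
        exact congrArg Sum.inr h2

lemma emC_surj : ∀ (n : ℕ) (j : Idx A' Mc), j.1 < n → ∃ c, emC A' Mc n c = j := by
  intro n
  induction n with
  | zero => intro j hj; omega
  | succ n ih =>
    intro j hj
    by_cases h : j.1 < n
    · obtain ⟨c, hc⟩ := ih j h
      exact ⟨Sum.inl c, hc⟩
    · obtain ⟨m, t⟩ := j
      have : m = n := by simp only at h hj; omega
      subst this
      exact ⟨Sum.inr t, rfl⟩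

/-- Degree of a generator. -/
def gdeg (j : Idx A' Mc) : ℤ := Sum.elim (fun p => p.1) (fun p => p.1) j.2

end IdxTypes
end SemiFreeCon
namespace SemiFreeCon
open DirectSum

variable {k A : Type} [CommRing k] [Ring A] [Algebra k A]
  (𝒜 : ℤ → Submodule k A) [GradedAlgebra 𝒜] (dA : A →ₗ[k] A)
variable (M : DGMod k A 𝒜 dA)

/-- The underlying module of the semi-free resolution: free on `Idx A M.carrier`. -/
abbrev Fc : Type := Idx A M.carrier →₀ A

/-- The grading on `Fc`. -/
def Fgr (n : ℤ) : Submodule k (Fc 𝒜 dA M) where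
  carrier := {v | ∀ j, v j ∈ 𝒜 (n - gdeg A M.carrier j)}
  add_mem' := by
    intro a b ha hb j
    rw [Finsupp.add_apply]
    exact add_mem (ha j) (hb j)
  zero_mem' := by intro j; simp
  smul_mem' := by
    intro c v hv j
    rw [Finsupp.smul_apply]
    exact Submodule.smul_mem _ c (hv j)

lemma mem_Fgr {v : Fc 𝒜 dA M} {n : ℤ} :
    v ∈ Fgr 𝒜 dA M n ↔ ∀ j, v j ∈ 𝒜 (n - gdeg A M.carrier j) := Iff.rfl

lemma single_mem_Fgr {a : A} {n : ℤ} {j : Idx A M.carrier}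
    (h : a ∈ 𝒜 (n - gdeg A M.carrier j)) :
    Finsupp.single j a ∈ Fgr 𝒜 dA M n := by
  intro j'
  rcases eq_or_ne j j' with rfl | hne
  · rwa [Finsupp.single_eq_same]
  · rw [Finsupp.single_eq_of_ne' hne]; exact zero_mem _

lemma smul_mem_Fgr {a : A} {v : Fc 𝒜 dA M} {p q : ℤ}
    (ha : a ∈ 𝒜 p) (hv : v ∈ Fgr 𝒜 dA M q) :
    a • v ∈ Fgr 𝒜 dA M (p + q) := by
  intro j
  rw [Finsupp.smul_apply, smul_eq_mul]
  have := SetLike.mul_mem_graded ha (hv j)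
  convert this using 2
  ring

/-- The differential associated to prescribed values `DF` on basis elements. -/
noncomputable def dOf (DF : Idx A M.carrier → Fc 𝒜 dA M) :
    Fc 𝒜 dA M →ₗ[k] Fc 𝒜 dA M :=
  Finsupp.lsum k (fun j => (Finsupp.lsingle j).comp dA + (eps 𝒜).smulRight (DF j))

lemma dOf_single (DF : Idx A M.carrier → Fc 𝒜 dA M) (j : Idx A M.carrier) (a : A) :
    dOf 𝒜 dA M DF (Finsupp.single j a)
      = Finsupp.single j (dA a) + eps 𝒜 a • DF j := by
  simp [dOf]

lemma dOf_congr {DF DF' : Idx A M.carrier → Fc 𝒜 dA M} {v : Fc 𝒜 dA M}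
    (h : ∀ j ∈ v.support, DF j = DF' j) : dOf 𝒜 dA M DF v = dOf 𝒜 dA M DF' v := by
  rw [dOf, dOf, Finsupp.lsum_apply, Finsupp.lsum_apply]
  exact Finsupp.sum_congr (fun j hj => by rw [h j hj])

/-- The comparison map associated to prescribed values `FV` on basis elements. -/
noncomputable def fOf (FV : Idx A M.carrier → M.carrier) :
    Fc 𝒜 dA M →ₗ[A] M.carrier :=
  Finsupp.linearCombination A FV

lemma fOf_single (FV : Idx A M.carrier → M.carrier) (j : Idx A M.carrier) (a : A) :
    fOf 𝒜 dA M FV (Finsupp.single j a) = a • FV j := by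
  simp [fOf]

lemma fOf_congr {FV FV' : Idx A M.carrier → M.carrier} {v : Fc 𝒜 dA M}
    (h : ∀ j ∈ v.support, FV j = FV' j) : fOf 𝒜 dA M FV v = fOf 𝒜 dA M FV' v := by
  rw [fOf, fOf, Finsupp.linearCombination_apply, Finsupp.linearCombination_apply]
  exact Finsupp.sum_congr (fun j hj => by rw [h j hj])

open scoped Classical

/-- A choice of a homogeneous preimage under `M.d`. -/
noncomputable def ychoice (i : ℤ) (m : M.carrier) : M.carrier :=
  if h : ∃ y ∈ M.grading i, m = M.d y then h.choose else 0

lemma ychoice_spec {i : ℤ} {m : M.carrier} (h : ∃ y ∈ M.grading i, m = M.d y) :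
    ychoice 𝒜 dA M i m ∈ M.grading i ∧ m = M.d (ychoice 𝒜 dA M i m) := by
  rw [ychoice, dif_pos h]
  exact ⟨h.choose_spec.1, h.choose_spec.2⟩

/-- One stage of the construction: values of `(d, f)` on the stage-`N` generators,
given the values `prev` on all earlier generators. -/
noncomputable def stageDef (prev : Idx A M.carrier → Fc 𝒜 dA M × M.carrier) (N : ℕ) :
    Tn A M.carrier N → Fc 𝒜 dA M × M.carrier := fun t =>
  match t with
  | Sum.inl p =>
      if N = 0 then
        (if p.2 ∈ M.grading p.1 ∧ M.d p.2 = 0 then ((0 : Fc 𝒜 dA M), p.2) else (0, 0))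
      else
        (if p.2 ∈ M.grading p.1 then
          (Finsupp.single (⟨0, Sum.inl (p.1 + 1, M.d p.2)⟩ : Idx A M.carrier) 1, p.2)
        else (0, 0))
  | Sum.inr p =>
      if Finsupp.embDomain ⟨emC A M.carrier N, emC_inj A M.carrier N⟩ p.2
              ∈ Fgr 𝒜 dA M (p.1 + 1) ∧
          dOf 𝒜 dA M (fun j => (prev j).1)
            (Finsupp.embDomain ⟨emC A M.carrier N, emC_inj A M.carrier N⟩ p.2) = 0 ∧
          ∃ y ∈ M.grading p.1,
            fOf 𝒜 dA M (fun j => (prev j).2)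
              (Finsupp.embDomain ⟨emC A M.carrier N, emC_inj A M.carrier N⟩ p.2) = M.d y
      then (Finsupp.embDomain ⟨emC A M.carrier N, emC_inj A M.carrier N⟩ p.2,
            ychoice 𝒜 dA M p.1 (fOf 𝒜 dA M (fun j => (prev j).2)
              (Finsupp.embDomain ⟨emC A M.carrier N, emC_inj A M.carrier N⟩ p.2)))
      else (0, 0)

/-- The recursively defined family `(d, f)` on generators: `Gaux N` is correct on
stages `< N`. -/
noncomputable def Gaux : ℕ → Idx A M.carrier → Fc 𝒜 dA M × M.carrier :=
  fun N => Nat.rec (motive := fun _ => Idx A M.carrier → Fc 𝒜 dA M × M.carrier)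
    (fun _ => (0, 0))
    (fun N ih j =>
      if j.1 < N then ih j
      else if h : j.1 = N then stageDef 𝒜 dA M ih N (h ▸ j.2) else (0, 0)) N

/-- The values of `(d, f)` on generators. -/
noncomputable def G (j : Idx A M.carrier) : Fc 𝒜 dA M × M.carrier :=
  Gaux 𝒜 dA M (j.1 + 1) j

lemma Gaux_succ (N : ℕ) (t : Tn A M.carrier N) :
    Gaux 𝒜 dA M (N + 1) ⟨N, t⟩ = stageDef 𝒜 dA M (Gaux 𝒜 dA M N) N t := by
  show (if N < N then _ else if h : N = N then _ else _) = _
  rw [if_neg (lt_irrefl N), dif_pos rfl]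
  rfl

lemma Gaux_eq_G (N : ℕ) (j : Idx A M.carrier) (hj : j.1 < N) :
    Gaux 𝒜 dA M N j = G 𝒜 dA M j := by
  induction N with
  | zero => omega
  | succ N ih =>
    by_cases h : j.1 < N
    · show (if j.1 < N then _ else _) = _
      rw [if_pos h]
      exact ih h
    · obtain ⟨m, t⟩ := j
      simp only at h hj
      have hm : m = N := by omega
      subst hm
      rfl

lemma stageDef_congr {prev prev' : Idx A M.carrier → Fc 𝒜 dA M × M.carrier} (N : ℕ)
    (h : ∀ j : Idx A M.carrier, j.1 < N → prev j = prev' j) (t : Tn A M.carrier N) :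
    stageDef 𝒜 dA M prev N t = stageDef 𝒜 dA M prev' N t := by
  cases t with
  | inl p => rfl
  | inr p =>
    have hsupp : ∀ j ∈ (Finsupp.embDomain
        ⟨emC A M.carrier N, emC_inj A M.carrier N⟩ p.2).support, j.1 < N := by
      intro j hj
      rw [Finsupp.support_embDomain, Finset.mem_map] at hj
      obtain ⟨c, _, rfl⟩ := hj
      exact emC_fst_lt A M.carrier N c
    have hd : dOf 𝒜 dA M (fun j => (prev j).1)
          (Finsupp.embDomain ⟨emC A M.carrier N, emC_inj A M.carrier N⟩ p.2)
        = dOf 𝒜 dA M (fun j => (prev' j).1)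
          (Finsupp.embDomain ⟨emC A M.carrier N, emC_inj A M.carrier N⟩ p.2) :=
      dOf_congr 𝒜 dA M (fun j hj => by rw [h j (hsupp j hj)])
    have hf : fOf 𝒜 dA M (fun j => (prev j).2)
          (Finsupp.embDomain ⟨emC A M.carrier N, emC_inj A M.carrier N⟩ p.2)
        = fOf 𝒜 dA M (fun j => (prev' j).2)
          (Finsupp.embDomain ⟨emC A M.carrier N, emC_inj A M.carrier N⟩ p.2) :=
      fOf_congr 𝒜 dA M (fun j hj => by rw [h j (hsupp j hj)])
    show ite _ _ _ = ite _ _ _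
    rw [hd, hf]

/-- Description of `G` at a stage-`N` generator in terms of the global `G`. -/
lemma G_eq (N : ℕ) (t : Tn A M.carrier N) :
    G 𝒜 dA M ⟨N, t⟩ = stageDef 𝒜 dA M (G 𝒜 dA M) N t := by
  show Gaux 𝒜 dA M (N + 1) ⟨N, t⟩ = _
  rw [Gaux_succ]
  exact stageDef_congr 𝒜 dA M N (fun j hj => Gaux_eq_G 𝒜 dA M N j hj) t

/-- `d` on basis elements. -/
noncomputable def Dfun (j : Idx A M.carrier) : Fc 𝒜 dA M := (G 𝒜 dA M j).1
/-- `f` on basis elements. -/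
noncomputable def fval (j : Idx A M.carrier) : M.carrier := (G 𝒜 dA M j).2

end SemiFreeCon
namespace SemiFreeCon
open DirectSum
open scoped Classical

variable {k A : Type} [CommRing k] [Ring A] [Algebra k A]
  (𝒜 : ℤ → Submodule k A) [GradedAlgebra 𝒜] (dA : A →ₗ[k] A)
variable (M : DGMod k A 𝒜 dA)

/-- Stage-0 generators: one for each (potential) homogeneous cycle of `M`. -/
def zI (i : ℤ) (m : M.carrier) : Idx A M.carrier := ⟨0, Sum.inl (i, m)⟩
/-- Stage-1 generators: one for each (potential) homogeneous element of `M`. -/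
def vI (i : ℤ) (m : M.carrier) : Idx A M.carrier := ⟨1, Sum.inl (i, m)⟩

lemma gdeg_zI (i : ℤ) (m : M.carrier) : gdeg A M.carrier (zI 𝒜 dA M i m) = i := rfl
lemma gdeg_vI (i : ℤ) (m : M.carrier) : gdeg A M.carrier (vI 𝒜 dA M i m) = i := rfl

lemma G_zI (i : ℤ) (m : M.carrier) :
    G 𝒜 dA M (zI 𝒜 dA M i m)
      = if m ∈ M.grading i ∧ M.d m = 0 then ((0 : Fc 𝒜 dA M), m) else (0, 0) := by
  rw [zI, G_eq]
  rfl

lemma Dfun_zI (i : ℤ) (m : M.carrier) : Dfun 𝒜 dA M (zI 𝒜 dA M i m) = 0 := by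
  rw [Dfun, G_zI]
  split_ifs <;> rfl

lemma fval_zI (i : ℤ) (m : M.carrier) (h1 : m ∈ M.grading i) (h2 : M.d m = 0) :
    fval 𝒜 dA M (zI 𝒜 dA M i m) = m := by
  rw [fval, G_zI, if_pos ⟨h1, h2⟩]

lemma G_vI (i : ℤ) (m : M.carrier) :
    G 𝒜 dA M (vI 𝒜 dA M i m)
      = if m ∈ M.grading i then
          (Finsupp.single (zI 𝒜 dA M (i + 1) (M.d m)) 1, m) else (0, 0) := by
  rw [vI, G_eq]
  rfl

lemma Dfun_vI (i : ℤ) (m : M.carrier) (h : m ∈ M.grading i) :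
    Dfun 𝒜 dA M (vI 𝒜 dA M i m)
      = Finsupp.single (zI 𝒜 dA M (i + 1) (M.d m)) 1 := by
  rw [Dfun, G_vI, if_pos h]

lemma fval_vI (i : ℤ) (m : M.carrier) (h : m ∈ M.grading i) :
    fval 𝒜 dA M (vI 𝒜 dA M i m) = m := by
  rw [fval, G_vI, if_pos h]

variable (hdAdeg : ∀ i : ℤ, ∀ x ∈ 𝒜 i, dA x ∈ 𝒜 (i + 1))
  (hdAleib : ∀ i : ℤ, ∀ x ∈ 𝒜 i, ∀ y : A,
      dA (x * y) = dA x * y + (Int.negOnePow i) • (x * dA y))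

include hdAleib in
/-- The master case analysis on generators. -/
lemma master (j : Idx A M.carrier) :
    Dfun 𝒜 dA M j ∈ Fgr 𝒜 dA M (gdeg A M.carrier j + 1) ∧
    fval 𝒜 dA M j ∈ M.grading (gdeg A M.carrier j) ∧
    dOf 𝒜 dA M (Dfun 𝒜 dA M) (Dfun 𝒜 dA M j) = 0 ∧
    fOf 𝒜 dA M (fval 𝒜 dA M) (Dfun 𝒜 dA M j) = M.d (fval 𝒜 dA M j) ∧
    ∀ j' ∈ (Dfun 𝒜 dA M j).support, j'.1 < j.1 := by
  obtain ⟨N, t⟩ := j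
  have hD : (fun j => (G 𝒜 dA M j).1) = Dfun 𝒜 dA M := rfl
  have hf : (fun j => (G 𝒜 dA M j).2) = fval 𝒜 dA M := rfl
  cases t with
  | inl p =>
    obtain ⟨i, m⟩ := p
    rcases Nat.eq_zero_or_pos N with rfl | hN
    · -- stage 0 : cycle generators
      have hGz := G_zI 𝒜 dA M i m
      rw [zI] at hGz
      by_cases h : m ∈ M.grading i ∧ M.d m = 0
      · rw [show Dfun 𝒜 dA M ⟨0, Sum.inl (i, m)⟩ = 0 from by unfold Dfun; rw [hGz, if_pos h],
          show fval 𝒜 dA M ⟨0, Sum.inl (i, m)⟩ = m from by unfold fval; rw [hGz, if_pos h]]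
        exact ⟨zero_mem _, h.1, by simp, by simp [h.2], by simp⟩
      · rw [show Dfun 𝒜 dA M ⟨0, Sum.inl (i, m)⟩ = 0 from by unfold Dfun; rw [hGz, if_neg h],
          show fval 𝒜 dA M ⟨0, Sum.inl (i, m)⟩ = 0 from by unfold fval; rw [hGz, if_neg h]]
        exact ⟨zero_mem _, zero_mem _, by simp, by simp, by simp⟩
    · -- stage ≥ 1 : element generators
      have hG : G 𝒜 dA M ⟨N, Sum.inl (i, m)⟩
          = if m ∈ M.grading i then
              (Finsupp.single (zI 𝒜 dA M (i + 1) (M.d m)) 1, m) else (0, 0) := by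
        rw [G_eq]
        show (if N = 0 then _ else _) = _
        rw [if_neg (by omega)]
        rfl
      by_cases h : m ∈ M.grading i
      · rw [show Dfun 𝒜 dA M ⟨N, Sum.inl (i, m)⟩
              = Finsupp.single (zI 𝒜 dA M (i + 1) (M.d m)) 1 from
            by unfold Dfun; rw [hG, if_pos h],
          show fval 𝒜 dA M ⟨N, Sum.inl (i, m)⟩ = m from by unfold fval; rw [hG, if_pos h]]
        have hdm : M.d m ∈ M.grading (i + 1) := M.d_mem i m h
        refine ⟨?_, h, ?_, ?_, ?_⟩
        · refine single_mem_Fgr 𝒜 dA M ?_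
          show (1 : A) ∈ 𝒜 (i + 1 - (i + 1))
          rw [sub_self]
          exact SetLike.one_mem_graded 𝒜
        · rw [dOf_single, dA_one 𝒜 dA hdAleib, eps_one, Dfun_zI, one_smul,
            Finsupp.single_zero, zero_add]
        · rw [fOf_single, fval_zI 𝒜 dA M _ _ hdm (M.d_sq m), one_smul]
        · intro j' hj'
          have := Finsupp.support_single_subset hj'
          rw [Finset.mem_singleton] at this
          subst this
          exact hN
      · rw [show Dfun 𝒜 dA M ⟨N, Sum.inl (i, m)⟩ = 0 from by unfold Dfun; rw [hG, if_neg h],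
          show fval 𝒜 dA M ⟨N, Sum.inl (i, m)⟩ = 0 from by unfold fval; rw [hG, if_neg h]]
        exact ⟨zero_mem _, zero_mem _, by simp, by simp, by simp⟩
  | inr p =>
    obtain ⟨i, w⟩ := p
    set w' : Fc 𝒜 dA M :=
      Finsupp.embDomain ⟨emC A M.carrier N, emC_inj A M.carrier N⟩ w with hw'
    have hG : G 𝒜 dA M ⟨N, Sum.inr (i, w)⟩
        = if w' ∈ Fgr 𝒜 dA M (i + 1) ∧ dOf 𝒜 dA M (Dfun 𝒜 dA M) w' = 0 ∧
              ∃ y ∈ M.grading i, fOf 𝒜 dA M (fval 𝒜 dA M) w' = M.d y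
          then (w', ychoice 𝒜 dA M i (fOf 𝒜 dA M (fval 𝒜 dA M) w')) else (0, 0) := by
      rw [G_eq]
      show (if _ then _ else _) = _
      rw [hD, hf]
    by_cases h : w' ∈ Fgr 𝒜 dA M (i + 1) ∧ dOf 𝒜 dA M (Dfun 𝒜 dA M) w' = 0 ∧
        ∃ y ∈ M.grading i, fOf 𝒜 dA M (fval 𝒜 dA M) w' = M.d y
    · have hy := ychoice_spec 𝒜 dA M (i := i) (m := fOf 𝒜 dA M (fval 𝒜 dA M) w') h.2.2
      rw [show Dfun 𝒜 dA M ⟨N, Sum.inr (i, w)⟩ = w' from by unfold Dfun; rw [hG, if_pos h],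
        show fval 𝒜 dA M ⟨N, Sum.inr (i, w)⟩
            = ychoice 𝒜 dA M i (fOf 𝒜 dA M (fval 𝒜 dA M) w') from
          by unfold fval; rw [hG, if_pos h]; rfl]
      refine ⟨h.1, hy.1, h.2.1, hy.2.symm ▸ hy.2, ?_⟩
      · intro j' hj'
        rw [hw', Finsupp.support_embDomain, Finset.mem_map] at hj'
        obtain ⟨c, _, rfl⟩ := hj'
        exact emC_fst_lt A M.carrier N c
    · rw [show Dfun 𝒜 dA M ⟨N, Sum.inr (i, w)⟩ = 0 from by unfold Dfun; rw [hG, if_neg h],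
        show fval 𝒜 dA M ⟨N, Sum.inr (i, w)⟩ = 0 from by unfold fval; rw [hG, if_neg h]]
      exact ⟨zero_mem _, zero_mem _, by simp, by simp, by simp⟩

end SemiFreeCon
namespace SemiFreeCon
open DirectSum
open scoped Classical

variable {k A : Type} [CommRing k] [Ring A] [Algebra k A]
  (𝒜 : ℤ → Submodule k A) [GradedAlgebra 𝒜] (dA : A →ₗ[k] A)
variable (M : DGMod k A 𝒜 dA)

lemma eps_mem {i : ℤ} {a : A} (ha : a ∈ 𝒜 i) : eps 𝒜 a ∈ 𝒜 i := by
  rw [eps_of_mem 𝒜 ha]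
  exact zsmul_mem ha _

/-- The differential of the semi-free resolution. -/
noncomputable def dF : Fc 𝒜 dA M →ₗ[k] Fc 𝒜 dA M := dOf 𝒜 dA M (Dfun 𝒜 dA M)

/-- The comparison map of the semi-free resolution. -/
noncomputable def fF : Fc 𝒜 dA M →ₗ[A] M.carrier := fOf 𝒜 dA M (fval 𝒜 dA M)

lemma dF_single (j : Idx A M.carrier) (a : A) :
    dF 𝒜 dA M (Finsupp.single j a)
      = Finsupp.single j (dA a) + eps 𝒜 a • Dfun 𝒜 dA M j := dOf_single 𝒜 dA M _ j a

lemma fF_single (j : Idx A M.carrier) (a : A) :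
    fF 𝒜 dA M (Finsupp.single j a) = a • fval 𝒜 dA M j := fOf_single 𝒜 dA M _ j a

variable (hdAdeg : ∀ i : ℤ, ∀ x ∈ 𝒜 i, dA x ∈ 𝒜 (i + 1))
  (hdAsq : ∀ x : A, dA (dA x) = 0)
  (hdAleib : ∀ i : ℤ, ∀ x ∈ 𝒜 i, ∀ y : A,
      dA (x * y) = dA x * y + (Int.negOnePow i) • (x * dA y))

include hdAleib in
lemma dF_leibniz (a : A) (v : Fc 𝒜 dA M) :
    dF 𝒜 dA M (a • v) = dA a • v + eps 𝒜 a • dF 𝒜 dA M v := by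
  induction v using Finsupp.induction with
  | zero => simp
  | single_add j b v hj hb ih =>
    rw [smul_add, map_add, ih, map_add]
    have hsingle : dF 𝒜 dA M (a • Finsupp.single j b)
        = dA a • Finsupp.single j b + eps 𝒜 a • dF 𝒜 dA M (Finsupp.single j b) := by
      rw [Finsupp.smul_single', dF_single, dF_single,
        dA_leibniz_eps 𝒜 dA hdAleib a b, eps_mul 𝒜 a b, Finsupp.single_add,
        Finsupp.smul_single', smul_add, Finsupp.smul_single', mul_smul]
      abel
    rw [hsingle, smul_add, smul_add]
    abel

include hdAdeg hdAsq hdAleib in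
lemma dF_sq (v : Fc 𝒜 dA M) : dF 𝒜 dA M (dF 𝒜 dA M v) = 0 := by
  induction v using Finsupp.induction with
  | zero => simp
  | single_add j b v hj hb ih =>
    rw [map_add, map_add, ih, add_zero, dF_single, map_add,
      dF_leibniz 𝒜 dA M hdAleib, dF_single]
    have hDD : dF 𝒜 dA M (Dfun 𝒜 dA M j) = 0 :=
      (master 𝒜 dA M hdAleib j).2.2.1
    rw [hDD, smul_zero, add_zero, eps_dA 𝒜 dA hdAdeg b]
    rw [show Finsupp.single j (dA (dA b)) = 0 from by rw [hdAsq b]; simp,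
      zero_add, neg_smul, neg_add_cancel]

include hdAleib in
lemma fF_chain (v : Fc 𝒜 dA M) :
    fF 𝒜 dA M (dF 𝒜 dA M v) = M.d (fF 𝒜 dA M v) := by
  induction v using Finsupp.induction with
  | zero => simp
  | single_add j b v hj hb ih =>
    rw [map_add, map_add, ih, map_add, dF_single, map_add, map_smul, fF_single,
      fF_single]
    have hfD : fF 𝒜 dA M (Dfun 𝒜 dA M j) = M.d (fval 𝒜 dA M j) :=
      (master 𝒜 dA M hdAleib j).2.2.2.1
    rw [hfD, map_add, Md_leibniz_eps 𝒜 dA M b (fval 𝒜 dA M j)]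

include hdAdeg in
lemma dF_mem {v : Fc 𝒜 dA M} {n : ℤ} (hv : v ∈ Fgr 𝒜 dA M n)
    (hmaster : ∀ j, Dfun 𝒜 dA M j ∈ Fgr 𝒜 dA M (gdeg A M.carrier j + 1)) :
    dF 𝒜 dA M v ∈ Fgr 𝒜 dA M (n + 1) := by
  rw [dF, dOf, Finsupp.lsum_apply]
  refine Submodule.finsuppSum_mem _ _ _ _ (fun j hj => ?_)
  show Finsupp.single j (dA (v j)) + eps 𝒜 (v j) • Dfun 𝒜 dA M j ∈ _
  refine add_mem ?_ ?_
  · refine single_mem_Fgr 𝒜 dA M ?_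
    have := hdAdeg _ _ (hv j)
    rw [show n + 1 - gdeg A M.carrier j = n - gdeg A M.carrier j + 1 from by ring]
    exact this
  · have h1 : eps 𝒜 (v j) ∈ 𝒜 (n - gdeg A M.carrier j) := eps_mem 𝒜 (hv j)
    have := smul_mem_Fgr 𝒜 dA M h1 (hmaster j)
    rwa [show n - gdeg A M.carrier j + (gdeg A M.carrier j + 1) = n + 1 from by ring]
      at this

lemma fF_mem {v : Fc 𝒜 dA M} {n : ℤ} (hv : v ∈ Fgr 𝒜 dA M n)
    (hmaster : ∀ j, fval 𝒜 dA M j ∈ M.grading (gdeg A M.carrier j)) :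
    fF 𝒜 dA M v ∈ M.grading n := by
  rw [fF, fOf, Finsupp.linearCombination_apply]
  refine Submodule.finsuppSum_mem _ _ _ _ (fun j hj => ?_)
  have := M.smul_mem _ _ _ _ (hv j) (hmaster j)
  rwa [show n - gdeg A M.carrier j + gdeg A M.carrier j = n from by ring] at this

end SemiFreeCon
set_option synthInstance.maxHeartbeats 1000000
set_option maxHeartbeats 1600000
namespace SemiFreeCon
open DirectSum
open scoped Classical

variable {k A : Type} [CommRing k] [Ring A] [Algebra k A]
  (𝒜 : ℤ → Submodule k A) [GradedAlgebra 𝒜] (dA : A →ₗ[k] A)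
variable (M : DGMod k A 𝒜 dA)

/-- Inclusion of the degree-`i` part of the `j`-component. -/
noncomputable def sgl (j : Idx A M.carrier) (i : ℤ) :
    𝒜 i →+ Fgr 𝒜 dA M (i + gdeg A M.carrier j) where
  toFun a := ⟨Finsupp.single j (a : A), single_mem_Fgr 𝒜 dA M (by
    rw [add_sub_cancel_right]; exact a.2)⟩
  map_zero' := by ext : 1; simp
  map_add' a b := by ext : 1; simp

/-- The decomposition map for `Fgr`. -/
noncomputable def decF : Fc 𝒜 dA M →+ ⨁ n : ℤ, Fgr 𝒜 dA M n :=
  Finsupp.liftAddHom (fun j =>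
    (DirectSum.toAddMonoid (fun i =>
      (DirectSum.of (fun n : ℤ => Fgr 𝒜 dA M n) (i + gdeg A M.carrier j)).comp
        (sgl 𝒜 dA M j i))).comp
      (DirectSum.decomposeAddEquiv 𝒜).toAddMonoidHom)

lemma of_eq_of_coe {i i' : ℤ} (h : i = i') (x : Fgr 𝒜 dA M i) (x' : Fgr 𝒜 dA M i')
    (hx : (x : Fc 𝒜 dA M) = x') :
    DirectSum.of (fun n : ℤ => Fgr 𝒜 dA M n) i x
      = DirectSum.of (fun n : ℤ => Fgr 𝒜 dA M n) i' x' := by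
  subst h
  exact congrArg _ (Subtype.ext hx)

lemma decF_single (j : Idx A M.carrier) {i : ℤ} {a : A} (ha : a ∈ 𝒜 i) :
    decF 𝒜 dA M (Finsupp.single j a)
      = DirectSum.of (fun n : ℤ => Fgr 𝒜 dA M n) (i + gdeg A M.carrier j)
          (sgl 𝒜 dA M j i ⟨a, ha⟩) := by
  rw [decF, Finsupp.liftAddHom_apply_single]
  simp only [AddMonoidHom.comp_apply, AddEquiv.toAddMonoidHom_eq_coe,
    AddMonoidHom.coe_coe]
  rw [show (DirectSum.decomposeAddEquiv 𝒜) a = DirectSum.decompose 𝒜 a from rfl,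
    DirectSum.decompose_of_mem 𝒜 ha, DirectSum.toAddMonoid_of]
  rfl

lemma decF_left_inv (v : Fc 𝒜 dA M) :
    DirectSum.coeAddMonoidHom (Fgr 𝒜 dA M) (decF 𝒜 dA M v) = v := by
  induction v using Finsupp.induction with
  | zero => simp
  | single_add j b v hj hb ih =>
    rw [map_add, map_add, ih]
    congr 1
    clear hb hj
    induction b using DirectSum.Decomposition.inductionOn 𝒜 with
    | zero => simp
    | homogeneous b' =>
      rename_i i
      obtain ⟨b, hb'⟩ := b'
      rw [decF_single 𝒜 dA M j hb', DirectSum.coeAddMonoidHom_of]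
      rfl
    | add x y hx hy =>
      rw [Finsupp.single_add, map_add, map_add, hx, hy]

lemma decF_right_inv (x : ⨁ n : ℤ, Fgr 𝒜 dA M n) :
    decF 𝒜 dA M (DirectSum.coeAddMonoidHom (Fgr 𝒜 dA M) x) = x := by
  induction x using DirectSum.induction_on with
  | zero => simp
  | of n v =>
    rw [DirectSum.coeAddMonoidHom_of]
    obtain ⟨v, hv⟩ := v
    show decF 𝒜 dA M v = _
    -- expand v as a sum of singles
    conv_lhs => rw [← Finsupp.sum_single v]
    rw [Finsupp.sum, map_sum]
    have hterm : ∀ j ∈ v.support,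
        decF 𝒜 dA M (Finsupp.single j (v j))
          = DirectSum.of (fun n : ℤ => Fgr 𝒜 dA M n) n
              ⟨Finsupp.single j (v j), single_mem_Fgr 𝒜 dA M (hv j)⟩ := by
      intro j _
      rw [decF_single 𝒜 dA M j (hv j)]
      exact of_eq_of_coe 𝒜 dA M (by ring) _ _ rfl
    rw [Finset.sum_congr rfl hterm, ← map_sum]
    congr 1
    ext : 1
    rw [AddSubmonoidClass.coe_finset_sum]
    exact Finsupp.sum_single v
  | add x y hx hy =>
    rw [map_add, map_add, hx, hy]

/-- The decomposition instance for the grading `Fgr`. -/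
noncomputable instance FgrDecomposition : DirectSum.Decomposition (Fgr 𝒜 dA M) where
  decompose' := decF 𝒜 dA M
  left_inv := decF_left_inv 𝒜 dA M
  right_inv := decF_right_inv 𝒜 dA M

end SemiFreeCon
namespace SemiFreeCon
open DirectSum
open scoped Classical

variable {k A : Type} [CommRing k] [Ring A] [Algebra k A]
  (𝒜 : ℤ → Submodule k A) [GradedAlgebra 𝒜] (dA : A →ₗ[k] A)
variable (M : DGMod k A 𝒜 dA)
variable (hdAdeg : ∀ i : ℤ, ∀ x ∈ 𝒜 i, dA x ∈ 𝒜 (i + 1))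
  (hdAsq : ∀ x : A, dA (dA x) = 0)
  (hdAleib : ∀ i : ℤ, ∀ x ∈ 𝒜 i, ∀ y : A,
      dA (x * y) = dA x * y + (Int.negOnePow i) • (x * dA y))

/-- The semi-free resolution as a dg module. -/
noncomputable def Fdg : DGMod k A 𝒜 dA where
  carrier := Fc 𝒜 dA M
  grading := Fgr 𝒜 dA M
  smul_mem := fun i j a m ha hm => smul_mem_Fgr 𝒜 dA M ha hm
  d := dF 𝒜 dA M
  d_mem := fun i m hm =>
    dF_mem 𝒜 dA M hdAdeg hm (fun j => (master 𝒜 dA M hdAleib j).1)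
  d_sq := dF_sq 𝒜 dA M hdAdeg hdAsq hdAleib
  leibniz := by
    intro i a m ha
    rw [dF_leibniz 𝒜 dA M hdAleib, eps_of_mem 𝒜 ha, smul_assoc]
    norm_num [Units.smul_def]

lemma Fdg_isSemiFree : (Fdg 𝒜 dA M hdAdeg hdAsq hdAleib).IsSemiFree := by
  refine ⟨Idx A M.carrier, Finsupp.basisSingleOne, gdeg A M.carrier,
    fun j => j.1, fun j => ?_, fun j => ?_⟩
  · show (Finsupp.basisSingleOne : Module.Basis (Idx A M.carrier) A (Fc 𝒜 dA M)) j
        ∈ Fgr 𝒜 dA M (gdeg A M.carrier j)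
    simp only [Finsupp.coe_basisSingleOne]
    refine single_mem_Fgr 𝒜 dA M ?_
    rw [sub_self]
    exact SetLike.one_mem_graded 𝒜
  · show dF 𝒜 dA M ((Finsupp.basisSingleOne : Module.Basis (Idx A M.carrier) A (Fc 𝒜 dA M)) j)
        ∈ Submodule.span A
          (⇑(Finsupp.basisSingleOne : Module.Basis (Idx A M.carrier) A (Fc 𝒜 dA M))
            '' {j' : Idx A M.carrier | j'.1 < j.1})
    simp only [Finsupp.coe_basisSingleOne]
    have hd : dF 𝒜 dA M (Finsupp.single j 1)
        = Dfun 𝒜 dA M j := by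
      rw [dF_single, dA_one 𝒜 dA hdAleib, eps_one, one_smul, Finsupp.single_zero,
        zero_add]
    rw [hd]
    have hsupp := (master 𝒜 dA M hdAleib j).2.2.2.2
    nth_rewrite 1 [← Finsupp.sum_single (Dfun 𝒜 dA M j)]
    refine Submodule.finsuppSum_mem _ _ _ _ (fun j' hj' => ?_)
    have : Finsupp.single j' (Dfun 𝒜 dA M j j')
        = (Dfun 𝒜 dA M j j') • Finsupp.single j' (1 : A) := by
      rw [Finsupp.smul_single', mul_one]
    rw [this]
    refine Submodule.smul_mem _ _ (Submodule.subset_span ?_)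
    exact ⟨j', hsupp j' (Finsupp.mem_support_iff.mpr hj'), rfl⟩

end SemiFreeCon
namespace SemiFreeCon
theorem statement10' {k A : Type} [CommRing k] [Ring A] [Algebra k A]
    (𝒜 : ℤ → Submodule k A) [GradedAlgebra 𝒜]
    (dA : A →ₗ[k] A)
    (hdAdeg : ∀ i : ℤ, ∀ x ∈ 𝒜 i, dA x ∈ 𝒜 (i + 1))
    (hdAsq : ∀ x : A, dA (dA x) = 0)
    (hdAleib : ∀ i : ℤ, ∀ x ∈ 𝒜 i, ∀ y : A,
      dA (x * y) = dA x * y + (Int.negOnePow i) • (x * dA y))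
    (M : DGMod k A 𝒜 dA) :
    ∃ (F : DGMod k A 𝒜 dA), F.IsSemiFree ∧
      ∃ f : F.carrier →ₗ[A] M.carrier,
        -- `f` is a surjective morphism of dg `A`-modules of degree 0 ...
        Function.Surjective f ∧
        (∀ i : ℤ, ∀ x ∈ F.grading i, f x ∈ M.grading i) ∧
        (∀ x, f (F.d x) = M.d (f x)) ∧
        -- ... which is a quasi-isomorphism: surjective on cohomology ...
        (∀ i : ℤ, ∀ m ∈ M.grading i, M.d m = 0 →
          ∃ x ∈ F.grading i, F.d x = 0 ∧ ∃ y, f x = m + M.d y) ∧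
        -- ... and injective on cohomology
        (∀ i : ℤ, ∀ x ∈ F.grading i, F.d x = 0 →
          (∃ y, f x = M.d y) → ∃ z, x = F.d z) := by
  classical
  refine ⟨Fdg 𝒜 dA M hdAdeg hdAsq hdAleib,
    Fdg_isSemiFree 𝒜 dA M hdAdeg hdAsq hdAleib,
    fF 𝒜 dA M, ?_, ?_, ?_, ?_, ?_⟩
  · -- surjectivity
    intro m
    induction m using DirectSum.Decomposition.inductionOn M.grading with
    | zero => exact ⟨0, map_zero _⟩
    | homogeneous m' =>
      rename_i i
      obtain ⟨m, hm⟩ := m'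
      refine ⟨Finsupp.single (vI 𝒜 dA M i m) 1, ?_⟩
      show fF 𝒜 dA M (Finsupp.single (vI 𝒜 dA M i m) 1) = m
      rw [fF_single, one_smul, fval_vI 𝒜 dA M i m hm]
    | add x y hx hy =>
      obtain ⟨a, ha⟩ := hx
      obtain ⟨b, hb⟩ := hy
      exact ⟨a + b, (map_add (fF 𝒜 dA M) a b).trans (congrArg₂ (· + ·) ha hb)⟩
  · -- grading compatibility
    intro i x hx
    show fF 𝒜 dA M x ∈ M.grading i
    exact fF_mem 𝒜 dA M hx (fun j => (master 𝒜 dA M hdAleib j).2.1)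
  · -- chain map
    intro x
    show fF 𝒜 dA M (dF 𝒜 dA M x) = M.d (fF 𝒜 dA M x)
    exact fF_chain 𝒜 dA M hdAleib x
  · -- surjective on cohomology
    intro i m hm hdm
    refine ⟨Finsupp.single (zI 𝒜 dA M i m) 1, ?_, ?_, 0, ?_⟩
    · refine single_mem_Fgr 𝒜 dA M ?_
      show (1 : A) ∈ 𝒜 (i - i)
      rw [sub_self]
      exact SetLike.one_mem_graded 𝒜
    · show dF 𝒜 dA M (Finsupp.single (zI 𝒜 dA M i m) 1) = 0
      rw [dF_single, dA_one 𝒜 dA hdAleib, Dfun_zI, smul_zero, Finsupp.single_zero,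
        add_zero]
    · show fF 𝒜 dA M (Finsupp.single (zI 𝒜 dA M i m) 1) = m + M.d 0
      rw [fF_single, one_smul, fval_zI 𝒜 dA M i m hm hdm, map_zero, add_zero]
  · -- injective on cohomology
    intro i x hx hdx hy
    obtain ⟨y, hy0⟩ := hy
    have hy : fF 𝒜 dA M x = M.d y := hy0
    have hdx' : dF 𝒜 dA M x = 0 := hdx
    have hx' : x ∈ Fgr 𝒜 dA M i := hx
    set N : ℕ := (x.support.sup fun j => j.1) + 1 with hNdef
    have hlt : ∀ j ∈ x.support, j.1 < N := fun j hj =>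
      Nat.lt_succ_of_le (Finset.le_sup (f := fun j : Idx A M.carrier => j.1) hj)
    have hinj := emC_inj A M.carrier N
    set emb : Cn A M.carrier N ↪ Idx A M.carrier := ⟨emC A M.carrier N, hinj⟩ with hembdef
    set w : Cn A M.carrier N →₀ A :=
      Finsupp.comapDomain (emC A M.carrier N) x hinj.injOn with hwdef
    have hemb : Finsupp.embDomain emb w = x := by
      ext j
      by_cases hr : j ∈ Set.range (emC A M.carrier N)
      · obtain ⟨c, rfl⟩ := hr
        rw [show emC A M.carrier N c = emb c from rfl, Finsupp.embDomain_apply_self]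
        rfl
      · rw [Finsupp.embDomain_notin_range _ _ _ hr]
        by_contra hne
        have hjs : j ∈ x.support := Finsupp.mem_support_iff.mpr (fun h => hne h.symm)
        obtain ⟨c, hc⟩ := emC_surj A M.carrier N j (hlt j hjs)
        exact hr ⟨c, hc⟩
    have hfx : fF 𝒜 dA M x ∈ M.grading i :=
      fF_mem 𝒜 dA M hx (fun j => (master 𝒜 dA M hdAleib j).2.1)
    have hyy : fF 𝒜 dA M x
        = M.d ((DirectSum.decompose M.grading y (i - 1) : M.carrier)) := by
      have h1 := DirectSum.decompose_of_mem_same M.grading hfx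
      rw [← h1, hy, Md_component 𝒜 dA M y i]
    set c : Idx A M.carrier := ⟨N, Sum.inr (i - 1, w)⟩ with hcdef
    have hD : (fun j => (G 𝒜 dA M j).1) = Dfun 𝒜 dA M := rfl
    have hfv : (fun j => (G 𝒜 dA M j).2) = fval 𝒜 dA M := rfl
    have hG : G 𝒜 dA M c
        = if Finsupp.embDomain emb w ∈ Fgr 𝒜 dA M (i - 1 + 1) ∧
              dOf 𝒜 dA M (Dfun 𝒜 dA M) (Finsupp.embDomain emb w) = 0 ∧
              ∃ y' ∈ M.grading (i - 1),
                fOf 𝒜 dA M (fval 𝒜 dA M) (Finsupp.embDomain emb w) = M.d y'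
          then (Finsupp.embDomain emb w,
                ychoice 𝒜 dA M (i - 1) (fOf 𝒜 dA M (fval 𝒜 dA M)
                  (Finsupp.embDomain emb w)))
          else (0, 0) := by
      rw [hcdef, G_eq]
      show (if _ then _ else _) = _
      rw [hD, hfv]
    have hcond : Finsupp.embDomain emb w ∈ Fgr 𝒜 dA M (i - 1 + 1) ∧
        dOf 𝒜 dA M (Dfun 𝒜 dA M) (Finsupp.embDomain emb w) = 0 ∧
        ∃ y' ∈ M.grading (i - 1),
          fOf 𝒜 dA M (fval 𝒜 dA M) (Finsupp.embDomain emb w) = M.d y' := by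
      rw [hemb]
      refine ⟨by rwa [sub_add_cancel], hdx',
        ⟨_, (DirectSum.decompose M.grading y (i - 1)).2, hyy⟩⟩
    have hDc : Dfun 𝒜 dA M c = x := by
      rw [Dfun, hG, if_pos hcond, hemb]
    refine ⟨Finsupp.single c 1, ?_⟩
    show x = dF 𝒜 dA M (Finsupp.single c 1)
    rw [dF_single, dA_one 𝒜 dA hdAleib, eps_one, one_smul, hDc,
      Finsupp.single_zero]
    exact (zero_add _).symm

end SemiFreeCon

theorem statement10 {k A : Type} [CommRing k] [Ring A] [Algebra k A]
    (𝒜 : ℤ → Submodule k A) [GradedAlgebra 𝒜]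
    (dA : A →ₗ[k] A)
    (hdAdeg : ∀ i : ℤ, ∀ x ∈ 𝒜 i, dA x ∈ 𝒜 (i + 1))
    (hdAsq : ∀ x : A, dA (dA x) = 0)
    (hdAleib : ∀ i : ℤ, ∀ x ∈ 𝒜 i, ∀ y : A,
      dA (x * y) = dA x * y + (Int.negOnePow i) • (x * dA y))
    (M : DGMod k A 𝒜 dA) :
    ∃ (F : DGMod k A 𝒜 dA), F.IsSemiFree ∧
      ∃ f : F.carrier →ₗ[A] M.carrier,
        -- `f` is a surjective morphism of dg `A`-modules of degree 0 ...
        Function.Surjective f ∧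
        (∀ i : ℤ, ∀ x ∈ F.grading i, f x ∈ M.grading i) ∧
        (∀ x, f (F.d x) = M.d (f x)) ∧
        -- ... which is a quasi-isomorphism: surjective on cohomology ...
        (∀ i : ℤ, ∀ m ∈ M.grading i, M.d m = 0 →
          ∃ x ∈ F.grading i, F.d x = 0 ∧ ∃ y, f x = m + M.d y) ∧
        -- ... and injective on cohomology
        (∀ i : ℤ, ∀ x ∈ F.grading i, F.d x = 0 →
          (∃ y, f x = M.d y) → ∃ z, x = F.d z) := SemiFreeCon.statement10' 𝒜 dA hdAdeg hdAsq hdAleib M
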